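/- Let 𝓗 be a finite-dimensional complex inner product space and let ψ̄₁,…,ψ̄_m : [0,T] → 𝓗 and ψ̃₁,…,ψ̃_m : [0,T] → 𝓗 be differentiable curves such that for every t ∈ [0,T]: {ψ̄_k(t)}_{k=1}^m is orthonormal, {ψ̃_k(t)}_{k=1}^m is orthonormal, both families span the same subspace of 𝓗, and ⟨ψ̄_p(t), (d/dt)ψ̃_k(t)⟩ = 0 for all 1 ≤ p, k ≤ m. Define V̄(t)_{p k} := ⟨ψ̄_p(t), ψ̃_k(t)⟩ and A(t)_{p k} := i·⟨ψ̄_p(t), (d/dt)ψ̄_k(t)⟩. Then V̄ satisfies the matrix differential equation i·V̄′(t) = −A(t)·V̄(t) for all t ∈ [0,T]. -/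

import Mathlib

open Matrix in
/-- If `{ψ̄_k(t)}` and `{ψ̃_k(t)}` are orthonormal frames of the same moving subspace and
the `ψ̃_k` are parallel (`⟨ψ̄_p, ψ̃_k′⟩ = 0`), then the transition matrix
`V̄(t)_{pk} = ⟨ψ̄_p(t), ψ̃_k(t)⟩` satisfies `i·V̄′ = −A·V̄` with
`A(t)_{pk} = i⟨ψ̄_p(t), ψ̄_k′(t)⟩`. -/
theorem transition_matrix_ode
    {𝓗 : Type*} [NormedAddCommGroup 𝓗] [InnerProductSpace ℂ 𝓗] [FiniteDimensional ℂ 𝓗]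
    (m : ℕ) (T : ℝ) (hT : 0 < T)
    (ψbar ψbar' ψtil ψtil' : Fin m → ℝ → 𝓗)
    (hbderiv : ∀ k, ∀ t ∈ Set.Icc (0:ℝ) T, HasDerivAt (ψbar k) (ψbar' k t) t)
    (htderiv : ∀ k, ∀ t ∈ Set.Icc (0:ℝ) T, HasDerivAt (ψtil k) (ψtil' k t) t)
    (hbon : ∀ t ∈ Set.Icc (0:ℝ) T, Orthonormal ℂ (fun k => ψbar k t))
    (hton : ∀ t ∈ Set.Icc (0:ℝ) T, Orthonormal ℂ (fun k => ψtil k t))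
    (hspan : ∀ t ∈ Set.Icc (0:ℝ) T,
      Submodule.span ℂ (Set.range fun k => ψbar k t)
        = Submodule.span ℂ (Set.range fun k => ψtil k t))
    (hpar : ∀ t ∈ Set.Icc (0:ℝ) T, ∀ p k, (inner ℂ (ψbar p t) (ψtil' k t) : ℂ) = 0)
    (Vbar A : ℝ → Matrix (Fin m) (Fin m) ℂ)
    (hVbar : ∀ t p k, Vbar t p k = (inner ℂ (ψbar p t) (ψtil k t) : ℂ))
    (hA : ∀ t p k, A t p k = Complex.I * (inner ℂ (ψbar p t) (ψbar' k t) : ℂ)) :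
    ∀ t ∈ Set.Icc (0:ℝ) T, ∃ D : Matrix (Fin m) (Fin m) ℂ,
      (∀ p k, HasDerivAt (fun s => Vbar s p k) (D p k) t) ∧
      Complex.I • D = -(A t * Vbar t) := by
  intro t ht
  refine ⟨fun p k => (inner ℂ (ψbar' p t) (ψtil k t) : ℂ), ?_, ?_⟩
  · intro p k
    have h := ((hbderiv p t ht).inner ℂ (htderiv k t ht))
    rw [hpar t ht p k, zero_add] at h
    exact h.congr_of_eventuallyEq (by filter_upwards with s using (hVbar s p k))
  · -- antisymmetry of ⟨ψ̄_p, ψ̄'_q⟩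
    have hanti : ∀ p q : Fin m,
        (inner ℂ (ψbar' p t) (ψbar q t) : ℂ) = -(inner ℂ (ψbar p t) (ψbar' q t) : ℂ) := by
      intro p q
      have hconst : ∀ s ∈ Set.Icc (0:ℝ) T,
          (inner ℂ (ψbar p s) (ψbar q s) : ℂ) = if p = q then 1 else 0 := by
        intro s hs
        simpa using orthonormal_iff_ite.mp (hbon s hs) p q
      have h1 : HasDerivWithinAt (fun s => (inner ℂ (ψbar p s) (ψbar q s) : ℂ))
          ((inner ℂ (ψbar p t) (ψbar' q t) : ℂ) + (inner ℂ (ψbar' p t) (ψbar q t) : ℂ))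
          (Set.Icc (0:ℝ) T) t :=
        ((hbderiv p t ht).hasDerivWithinAt.inner ℂ (hbderiv q t ht).hasDerivWithinAt)
      have h2 : HasDerivWithinAt (fun s => (inner ℂ (ψbar p s) (ψbar q s) : ℂ))
          0 (Set.Icc (0:ℝ) T) t := by
        refine (hasDerivWithinAt_const t _ (if p = q then (1:ℂ) else 0)).congr
          hconst (hconst t ht)
      have := (h1.derivWithin (uniqueDiffOn_Icc hT t ht)).symm.trans
        (h2.derivWithin (uniqueDiffOn_Icc hT t ht))
      linear_combination this
    ext p k
    -- expand ψtil k t in the frame ψbar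
    have hxmem : ψtil k t ∈ Submodule.span ℂ (Set.range fun q => ψbar q t) := by
      rw [hspan t ht]
      exact Submodule.subset_span ⟨k, rfl⟩
    obtain ⟨c, hc⟩ := (Finsupp.mem_span_range_iff_exists_finsupp).mp hxmem
    rw [Finsupp.sum_fintype _ _ (by simp)] at hc
    have hcoef : ∀ q, (inner ℂ (ψbar q t) (ψtil k t) : ℂ) = c q := by
      intro q
      rw [← hc]
      exact (hbon t ht).inner_right_fintype c q
    simp only [Matrix.smul_apply, Matrix.neg_apply, Matrix.mul_apply, hA, hVbar,
      smul_eq_mul, hcoef]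
    change Complex.I * inner ℂ (ψbar' p t) (ψtil k t) = _
    conv_lhs => rw [← hc, inner_sum]
    simp only [inner_smul_right]
    rw [Finset.mul_sum, ← Finset.sum_neg_distrib]
    refine Finset.sum_congr rfl fun q _ => ?_
    rw [hanti p q]
    ring
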